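/- Let Φ : ℝ^N → ℝ^P be a linear map, ξ > 0, x ∈ ℝ^N and y ∈ ℝ^P. Then the linear map Id_P + ξ Φ Φᵀ on ℝ^P is invertible, and the unique minimizer of z ↦ (1/2)‖z − x‖² + (ξ/2)‖Φ z − y‖² over ℝ^N is z* = x + ξ Φᵀ y − ξ Φᵀ (Id_P + ξ Φ Φᵀ)^{-1} Φ (x + ξ Φᵀ y). -/

import Mathlib

open ContinuousLinearMap

noncomputable section

set_option maxHeartbeats 1000000 in
/-- **Closed form (Woodbury form) of the proximal operator of the data-fidelity term.**
For a linear map `Φ : ℝ^N → ℝ^P`, `ξ > 0`, `x ∈ ℝ^N`, `y ∈ ℝ^P`, the operator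
`Id_P + ξ Φ Φᵀ` is invertible, and the unique minimizer of
`z ↦ (1/2)‖z - x‖² + (ξ/2)‖Φ z - y‖²` is
`z* = x + ξ Φᵀ y - ξ Φᵀ (Id_P + ξ Φ Φᵀ)⁻¹ Φ (x + ξ Φᵀ y)`
(the inverse being expressed by the vector `v` with `(Id_P + ξ Φ Φᵀ) v = Φ (x + ξ Φᵀ y)`). -/
theorem prox_data_fidelity_closed_form
    {N P : ℕ} (Φ : EuclideanSpace ℝ (Fin N) →L[ℝ] EuclideanSpace ℝ (Fin P))
    (ξ : ℝ) (hξ : 0 < ξ) (x : EuclideanSpace ℝ (Fin N)) (y : EuclideanSpace ℝ (Fin P)) :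
    Function.Bijective
        ((1 : EuclideanSpace ℝ (Fin P) →L[ℝ] EuclideanSpace ℝ (Fin P))
          + ξ • (Φ ∘L ContinuousLinearMap.adjoint Φ)) ∧
      ∀ v : EuclideanSpace ℝ (Fin P),
        ((1 : EuclideanSpace ℝ (Fin P) →L[ℝ] EuclideanSpace ℝ (Fin P))
            + ξ • (Φ ∘L ContinuousLinearMap.adjoint Φ)) v
          = Φ (x + ξ • ContinuousLinearMap.adjoint Φ y) →
        ∀ z : EuclideanSpace ℝ (Fin N),
          z ≠ x + ξ • ContinuousLinearMap.adjoint Φ y - ξ • ContinuousLinearMap.adjoint Φ v →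
          (1 / 2) * ‖(x + ξ • ContinuousLinearMap.adjoint Φ y
                - ξ • ContinuousLinearMap.adjoint Φ v) - x‖ ^ 2
              + (ξ / 2) * ‖Φ (x + ξ • ContinuousLinearMap.adjoint Φ y
                - ξ • ContinuousLinearMap.adjoint Φ v) - y‖ ^ 2
            < (1 / 2) * ‖z - x‖ ^ 2 + (ξ / 2) * ‖Φ z - y‖ ^ 2 := by
  set Φt := ContinuousLinearMap.adjoint Φ with hΦt
  set T := (1 : EuclideanSpace ℝ (Fin P) →L[ℝ] EuclideanSpace ℝ (Fin P))
      + ξ • (Φ ∘L Φt) with hT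
  have hTapp : ∀ u, T u = u + ξ • Φ (Φt u) := by
    intro u
    simp [hT, ContinuousLinearMap.add_apply]
  have hker : ∀ u, T u = 0 → u = 0 := by
    intro u hu
    have h2 : inner ℝ (T u) u = ‖u‖ ^ 2 + ξ * ‖Φt u‖ ^ 2 := by
      rw [hTapp, inner_add_left, real_inner_smul_left, real_inner_self_eq_norm_sq, hΦt,
        ← ContinuousLinearMap.adjoint_inner_right, real_inner_self_eq_norm_sq]
    rw [hu, inner_zero_left] at h2
    have hn : ‖u‖ ^ 2 = 0 := by nlinarith [sq_nonneg ‖u‖, sq_nonneg ‖Φt u‖, norm_nonneg u]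
    have : ‖u‖ = 0 := by nlinarith [norm_nonneg u]
    simpa using this
  have hinj : Function.Injective T := by
    intro a b hab
    have := hker (a - b) (by rw [map_sub, hab, sub_self])
    exact sub_eq_zero.mp this
  have hsurj : Function.Surjective T :=
    (LinearMap.injective_iff_surjective (f := (T : EuclideanSpace ℝ (Fin P) →ₗ[ℝ]
      EuclideanSpace ℝ (Fin P)))).mp hinj
  refine ⟨⟨hinj, hsurj⟩, ?_⟩
  intro v hv z hz
  set s := x + ξ • Φt y with hs
  set zs := s - ξ • Φt v with hzs
  have hΦzs : Φ zs = v := by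
    have h1 : Φ s = v + ξ • Φ (Φt v) := by rw [← hv, hTapp]
    rw [hzs, map_sub, map_smul, h1]
    abel
  set w := z - zs with hw
  have hwne : w ≠ 0 := sub_ne_zero.mpr hz
  have hzw : z = zs + w := by rw [hw]; abel
  have e1 : ‖z - x‖ ^ 2 = ‖zs - x‖ ^ 2 + 2 * inner ℝ (zs - x) w + ‖w‖ ^ 2 := by
    have : z - x = (zs - x) + w := by rw [hzw]; abel
    rw [this, @norm_add_sq_real]
  have e2 : ‖Φ z - y‖ ^ 2 = ‖Φ zs - y‖ ^ 2 + 2 * inner ℝ (Φ zs - y) (Φ w) + ‖Φ w‖ ^ 2 := by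
    have : Φ z - y = (Φ zs - y) + Φ w := by rw [hzw, map_add]; abel
    rw [this, @norm_add_sq_real]
  have hcross : inner ℝ (zs - x) w + ξ * inner ℝ (Φ zs - y) (Φ w) = 0 := by
    have h1 : zs - x = ξ • Φt (y - v) := by
      rw [hzs, hs, map_sub, smul_sub]; abel
    have h2 : (inner ℝ (Φ zs - y) (Φ w) : ℝ) = inner ℝ (Φt (Φ zs - y)) w := by
      rw [ContinuousLinearMap.adjoint_inner_left]
    rw [h1, h2, hΦzs, real_inner_smul_left]
    have : Φt (v - y) = - Φt (y - v) := by rw [← map_neg]; congr 1; abel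
    rw [this, inner_neg_left]
    ring
  have hwpos : 0 < ‖w‖ ^ 2 := pow_pos (norm_pos_iff.mpr hwne) 2
  have hΦw : 0 ≤ ‖Φ w‖ ^ 2 := sq_nonneg _
  have hzsx : zs - x = (x + ξ • Φt y - ξ • Φt v) - x := by rw [hzs, hs]
  have hzsy : Φ zs - y = Φ (x + ξ • Φt y - ξ • Φt v) - y := by rw [hzs, hs]
  rw [← hzsx, ← hzsy, e1, e2]
  nlinarith [hcross, hwpos, hΦw, hξ]
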